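/- Let X be a real n×m matrix, Y a real d×m matrix, and β > 0. Define the ridge cost J(W) = ‖W * X − Y‖_F² + β ‖W‖_F² for W a real d×n matrix, where ‖·‖_F is the Frobenius norm. Then W* = Y * Xᵀ * (X * Xᵀ + β • 1)⁻¹ satisfies J(W*) ≤ J(W) for every d×n matrix W, and J(W*) = J(W) implies W = W*; i.e., W* is the unique minimizer of the ridge cost. -/

import Mathlib

/-- The squared Frobenius norm of a real matrix. -/
noncomputable def frobSq {n m : Type*} [Fintype n] [Fintype m]
    (M : Matrix n m ℝ) : ℝ :=
  ∑ i, ∑ j, (M i j) ^ 2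

/-- `W* = Y Xᵀ (X Xᵀ + β I)⁻¹` is the unique minimizer of the ridge cost
`J(W) = ‖W X − Y‖_F² + β ‖W‖_F²`. -/
theorem ridge_unique_minimizer {n m d : ℕ}
    (X : Matrix (Fin n) (Fin m) ℝ) (Y : Matrix (Fin d) (Fin m) ℝ)
    (β : ℝ) (hβ : 0 < β) :
    let J : Matrix (Fin d) (Fin n) ℝ → ℝ :=
      fun W => frobSq (W * X - Y) + β * frobSq W
    let Wstar : Matrix (Fin d) (Fin n) ℝ :=
      Y * X.transpose * (X * X.transpose + β • (1 : Matrix (Fin n) (Fin n) ℝ))⁻¹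
    (∀ W, J Wstar ≤ J W) ∧ (∀ W, J Wstar = J W → W = Wstar) := by
  intro J Wstar
  set A : Matrix (Fin n) (Fin n) ℝ :=
    X * X.transpose + β • (1 : Matrix (Fin n) (Fin n) ℝ) with hAdef
  have hA : A.PosDef := by
    rw [hAdef]
    apply Matrix.PosDef.posSemidef_add
    · simpa using Matrix.posSemidef_self_mul_conjTranspose X
    · have h1 : (β • (1 : Matrix (Fin n) (Fin n) ℝ))
          = Matrix.diagonal (fun _ => β) := by
        ext i j
        by_cases h : i = j <;> simp [h, Matrix.one_apply]
      rw [h1]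
      exact Matrix.PosDef.diagonal (fun _ => hβ)
  have hAsym : A.transpose = A := by
    rw [hAdef]
    simp [Matrix.transpose_add, Matrix.transpose_mul, Matrix.transpose_smul]
  have hWs : Wstar = Y * X.transpose * A⁻¹ := rfl
  have hWA : Wstar * A = Y * X.transpose := by
    rw [hWs, Matrix.mul_assoc,
      Matrix.nonsing_inv_mul A ((Matrix.isUnit_iff_isUnit_det A).mp hA.isUnit),
      Matrix.mul_one]
  have hAW : A * Wstar.transpose = X * Y.transpose := by
    calc A * Wstar.transpose = (Wstar * A.transpose).transpose := by
          simp [Matrix.transpose_mul]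
    _ = (Y * X.transpose).transpose := by rw [hAsym, hWA]
    _ = X * Y.transpose := by simp [Matrix.transpose_mul]
  have trace_frob : ∀ {k l : ℕ} (M : Matrix (Fin k) (Fin l) ℝ),
      frobSq M = (M * M.transpose).trace := by
    intro k l M
    simp [frobSq, Matrix.trace, Matrix.mul_apply, Matrix.diag, sq]
  have expand : ∀ V : Matrix (Fin d) (Fin n) ℝ,
      (V * X - Y) * (V * X - Y).transpose + β • (V * V.transpose)
        = V * A * V.transpose - V * (X * Y.transpose)
          - (Y * X.transpose) * V.transpose + Y * Y.transpose := by
    intro V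
    rw [hAdef]
    simp only [Matrix.transpose_sub, Matrix.transpose_mul, Matrix.sub_mul,
      Matrix.mul_sub, Matrix.mul_add, Matrix.add_mul, Matrix.mul_smul,
      Matrix.smul_mul, Matrix.mul_one, Matrix.one_mul, smul_sub, smul_add,
      Matrix.mul_assoc]
    abel
  have key : ∀ W : Matrix (Fin d) (Fin n) ℝ,
      (W * X - Y) * (W * X - Y).transpose + β • (W * W.transpose)
        = ((Wstar * X - Y) * (Wstar * X - Y).transpose
            + β • (Wstar * Wstar.transpose))
          + (W - Wstar) * A * (W - Wstar).transpose := by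
    intro W
    rw [expand W, expand Wstar, ← hWA, ← hAW]
    simp only [Matrix.transpose_sub, Matrix.sub_mul, Matrix.mul_sub,
      Matrix.mul_assoc]
    abel
  have hJ : ∀ W, J W = J Wstar + ((W - Wstar) * A * (W - Wstar).transpose).trace := by
    intro W
    have h1 : ∀ V : Matrix (Fin d) (Fin n) ℝ,
        J V = ((V * X - Y) * (V * X - Y).transpose + β • (V * V.transpose)).trace := by
      intro V
      simp [J, trace_frob, Matrix.trace_add, Matrix.trace_smul, smul_eq_mul]
    rw [h1 W, h1 Wstar, key W, Matrix.trace_add]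
  have diag_eq : ∀ (D : Matrix (Fin d) (Fin n) ℝ) (i : Fin d),
      (D * A * D.transpose) i i = dotProduct (star (D i)) (A.mulVec (D i)) := by
    intro D i
    simp only [Matrix.mul_apply, Matrix.mulVec, dotProduct,
      Matrix.transpose_apply, Finset.sum_mul, Finset.mul_sum, star_trivial,
      Pi.star_apply]
    rw [Finset.sum_comm]
    congr 1; ext k; congr 1; ext j; ring
  have hq : ∀ D : Matrix (Fin d) (Fin n) ℝ,
      0 ≤ ((D * A * D.transpose).trace) := by
    intro D
    rw [Matrix.trace]
    apply Finset.sum_nonneg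
    intro i _
    rw [Matrix.diag_apply, diag_eq]
    exact hA.posSemidef.dotProduct_mulVec_nonneg (D i)
  have hq0 : ∀ D : Matrix (Fin d) (Fin n) ℝ,
      ((D * A * D.transpose).trace) = 0 → D = 0 := by
    intro D h
    ext i j
    have hall : ∀ i ∈ Finset.univ, (D * A * D.transpose).diag i = 0 := by
      rw [Matrix.trace] at h
      exact (Finset.sum_eq_zero_iff_of_nonneg
        (fun i _ => by rw [Matrix.diag_apply, diag_eq]; exact hA.posSemidef.dotProduct_mulVec_nonneg (D i))).mp h
    have hrow : D i = 0 := by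
      by_contra hne
      have := hA.dotProduct_mulVec_pos hne
      rw [← diag_eq] at this
      have h0 := hall i (Finset.mem_univ i)
      rw [Matrix.diag_apply] at h0
      linarith
    simpa using congrFun hrow j
  constructor
  · intro W
    have := hq (W - Wstar)
    linarith [hJ W]
  · intro W h
    have h0 : ((W - Wstar) * A * (W - Wstar).transpose).trace = 0 := by
      have := hJ W
      linarith
    have := hq0 _ h0
    rwa [sub_eq_zero] at this
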